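/- Let P be a substochastic matrix on a countable set Λ with c := sup_{x∈Λ} (1 − Σ_{y∈Λ} P(x,y)) < 1, and suppose there exists z ∈ Λ with δ_z := inf_{x∈Λ} P(x,z) > 0. Then P^{n+1}(z,z) ≥ (1−c)^n δ_z for every n ≥ 0, and consequently liminf_{n→∞} (P^n(z,z))^{1/n} ≥ 1 − c. (This is the discrete form of the paper's bound γ ≤ C on the decay parameter in the proof of Theorem 2.3: the exponential decay rate is at most the maximal killing rate.) -/

import Mathlib

open Filter Topology

/-- Powers of a matrix indexed by a countable set: `matPow P 0 = Id`,
`matPow P (n+1) x y = ∑ z, matPow P n x z * P z y`. -/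
noncomputable def matPow {Λ : Type*} [DecidableEq Λ] (P : Λ → Λ → ℝ) : ℕ → Λ → Λ → ℝ
  | 0 => fun x y => if x = y then 1 else 0
  | n + 1 => fun x y => ∑' z, matPow P n x z * P z y

/-- Row bounds for matrix powers. -/
lemma matPow_row {Λ : Type*} [DecidableEq Λ] (P : Λ → Λ → ℝ)
    (hP0 : ∀ x y, 0 ≤ P x y) (hPsum : ∀ x, Summable (P x)) (hP1 : ∀ x, ∑' y, P x y ≤ 1)
    {c : ℝ} (hc0 : 0 ≤ 1 - c) (hcle : ∀ x, 1 - c ≤ ∑' y, P x y) :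
    ∀ n x, (∀ y, 0 ≤ matPow P n x y) ∧ Summable (matPow P n x) ∧
      ∑' y, matPow P n x y ≤ 1 ∧ (1 - c) ^ n ≤ ∑' y, matPow P n x y := by
  intro n
  induction n with
  | zero =>
    intro x
    have h0 : ∀ y, (0:ℝ) ≤ if x = y then 1 else 0 := fun y => by split <;> norm_num
    have hts : ∑' y, (if x = y then (1:ℝ) else 0) = 1 := by
      rw [tsum_eq_single x (fun y hy => by simp [Ne.symm hy])]; simp
    refine ⟨h0, ?_, ?_, ?_⟩
    · exact summable_of_ne_finset_zero (s := {x}) (fun y hy => by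
        simp at hy; simp [matPow, Ne.symm hy])
    · show ∑' y, (if x = y then (1:ℝ) else 0) ≤ 1
      rw [hts]
    · show (1-c)^0 ≤ ∑' y, (if x = y then (1:ℝ) else 0)
      rw [hts]; norm_num
  | succ n ih =>
    intro x
    obtain ⟨hQ0, hQsum, hQ1, hQlb⟩ := ih x
    set Q : Λ → ℝ := matPow P n x with hQ
    have hF0 : ∀ p : Λ × Λ, 0 ≤ Q p.1 * P p.1 p.2 :=
      fun p => mul_nonneg (hQ0 p.1) (hP0 p.1 p.2)
    have hrow : ∀ w, Summable (fun y => Q w * P w y) := fun w => (hPsum w).mul_left _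
    have hrowsum : ∀ w, ∑' y, Q w * P w y = Q w * ∑' y, P w y := fun w => tsum_mul_left
    have hsum2 : Summable (fun w => ∑' y, Q w * P w y) := by
      apply Summable.of_nonneg_of_le (fun w => tsum_nonneg (fun y => hF0 (w, y)))
        (fun w => ?_) hQsum
      rw [hrowsum w]
      calc Q w * ∑' y, P w y ≤ Q w * 1 := by
            exact mul_le_mul_of_nonneg_left (hP1 w) (hQ0 w)
        _ = Q w := mul_one _
    have hF : Summable (fun p : Λ × Λ => Q p.1 * P p.1 p.2) :=
      (summable_prod_of_nonneg hF0).2 ⟨hrow, hsum2⟩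
    have hcols : ∀ y, Summable (fun w => Q w * P w y) := fun y =>
      ((summable_prod_of_nonneg (f := fun p : Λ × Λ => Q p.2 * P p.2 p.1)
        (fun p => hF0 (p.2, p.1))).1 (hF.prod_symm)).1 y
    have hswap : ∑' y, ∑' w, Q w * P w y = ∑' w, ∑' y, Q w * P w y :=
      Summable.tsum_comm' hF hrow hcols
    have hsumcol : Summable (fun y => ∑' w, Q w * P w y) := by
      exact ((summable_prod_of_nonneg (f := fun p : Λ × Λ => Q p.2 * P p.2 p.1)
        (fun p => hF0 (p.2, p.1))).1 (hF.prod_symm)).2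
    have hmat : matPow P (n+1) x = fun y => ∑' w, Q w * P w y := rfl
    refine ⟨fun y => tsum_nonneg (fun w => hF0 (w, y)), by rw [hmat]; exact hsumcol, ?_, ?_⟩
    · rw [hmat, hswap]
      calc ∑' w, ∑' y, Q w * P w y ≤ ∑' w, Q w := by
            apply Summable.tsum_le_tsum _ hsum2 hQsum
            intro w
            rw [hrowsum w]
            nlinarith [hP1 w, hQ0 w]
        _ ≤ 1 := hQ1
    · rw [hmat, hswap]
      calc (1 - c) ^ (n + 1) = (1 - c) ^ n * (1 - c) := pow_succ _ _
        _ ≤ (∑' w, Q w) * (1 - c) := mul_le_mul_of_nonneg_right hQlb hc0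
        _ = ∑' w, Q w * (1 - c) := tsum_mul_right.symm
        _ ≤ ∑' w, ∑' y, Q w * P w y := by
            apply Summable.tsum_le_tsum _ (hQsum.mul_right _) hsum2
            intro w
            rw [hrowsum w]
            exact mul_le_mul_of_nonneg_left (hcle w) (hQ0 w)

/-- if the maximal killing `c = sup_x (1 − Σ_y P(x,y))` satisfies `c < 1`
and there is a state `z` with `δ_z = inf_x P(x,z) > 0`, then
`P^{n+1}(z,z) ≥ (1−c)ⁿ δ_z`, and consequently
`liminf_n (Pⁿ(z,z))^{1/n} ≥ 1 − c`. -/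
theorem decay_rate_at_most_killing_rate
    {Λ : Type*} [Countable Λ] [Nonempty Λ] [DecidableEq Λ]
    (P : Λ → Λ → ℝ)
    -- substochastic
    (hP0 : ∀ x y, 0 ≤ P x y)
    (hPsum : ∀ x, Summable (P x))
    (hP1 : ∀ x, ∑' y, P x y ≤ 1)
    (z : Λ)
    (hδz : 0 < ⨅ x, P x z)
    (hc : (⨆ x, (1 - ∑' y, P x y)) < 1) :
    (∀ n : ℕ, (1 - ⨆ x, (1 - ∑' y, P x y)) ^ n * (⨅ x, P x z)
        ≤ matPow P (n + 1) z z) ∧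
    (1 - ⨆ x, (1 - ∑' y, P x y))
        ≤ Filter.liminf (fun n : ℕ => (matPow P n z z) ^ ((n : ℝ)⁻¹)) atTop := by
  set c : ℝ := ⨆ x, (1 - ∑' y, P x y) with hcdef
  set δ : ℝ := ⨅ x, P x z with hδdef
  have hc0 : 0 < 1 - c := by linarith
  have hbdd : BddAbove (Set.range fun x => 1 - ∑' y, P x y) :=
    ⟨1, by rintro _ ⟨x, rfl⟩; have : 0 ≤ ∑' y, P x y := tsum_nonneg (hP0 x); simp; linarith⟩
  have hcle : ∀ x, 1 - c ≤ ∑' y, P x y := fun x => by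
    have := le_ciSup hbdd x; rw [← hcdef] at this; linarith
  have hδle : ∀ x, δ ≤ P x z := fun x =>
    ciInf_le ⟨0, by rintro _ ⟨x, rfl⟩; exact hP0 x z⟩ x
  have hrow := matPow_row P hP0 hPsum hP1 hc0.le hcle
  -- entry bound
  have hPz1 : ∀ w, P w z ≤ 1 := fun w =>
    le_trans (Summable.le_tsum (hPsum w) z (fun y _ => hP0 w y)) (hP1 w)
  have key : ∀ n : ℕ, (1 - c) ^ n * δ ≤ matPow P (n + 1) z z := by
    intro n
    obtain ⟨hQ0, hQsum, hQ1, hQlb⟩ := hrow n z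
    have hRHSsum : Summable (fun w => matPow P n z w * P w z) := by
      apply Summable.of_nonneg_of_le (fun w => mul_nonneg (hQ0 w) (hP0 w z))
        (fun w => ?_) hQsum
      nlinarith [hPz1 w, hQ0 w, hP0 w z]
    have h1 : (1 - c) ^ n * δ ≤ (∑' w, matPow P n z w) * δ :=
      mul_le_mul_of_nonneg_right hQlb hδz.le
    have h2 : (∑' w, matPow P n z w) * δ = ∑' w, matPow P n z w * δ := tsum_mul_right.symm
    have h3 : ∑' w, matPow P n z w * δ ≤ ∑' w, matPow P n z w * P w z := by
      apply Summable.tsum_le_tsum (fun w => mul_le_mul_of_nonneg_left (hδle w) (hQ0 w))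
        (hQsum.mul_right _) hRHSsum
    show (1 - c) ^ n * δ ≤ ∑' w, matPow P n z w * P w z
    linarith
  refine ⟨key, ?_⟩
  -- liminf part
  set K : ℝ := δ / (1 - c) with hKdef
  have hK : 0 < K := div_pos hδz hc0
  set f : ℕ → ℝ := fun n => (matPow P n z z) ^ ((n : ℝ)⁻¹) with hfdef
  set g : ℕ → ℝ := fun n => (1 - c) * K ^ ((n : ℝ)⁻¹) with hgdef
  have hentry : ∀ n, matPow P n z z ≤ 1 := fun n => by
    obtain ⟨hQ0, hQsum, hQ1, _⟩ := hrow n z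
    exact le_trans (Summable.le_tsum hQsum z (fun y _ => hQ0 y)) hQ1
  have hentry0 : ∀ n, 0 ≤ matPow P n z z := fun n => (hrow n z).1 z
  have hf1 : ∀ n, f n ≤ 1 := fun n =>
    Real.rpow_le_one (hentry0 n) (hentry n) (by positivity)
  -- g tends to 1 - c
  have hgt : Tendsto g atTop (𝓝 (1 - c)) := by
    have h1 : Tendsto (fun n : ℕ => K ^ ((n : ℝ)⁻¹)) atTop (𝓝 1) := by
      have : (fun n : ℕ => K ^ ((n : ℝ)⁻¹)) =
          fun n : ℕ => Real.exp (Real.log K * (n : ℝ)⁻¹) := by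
        funext n; rw [Real.rpow_def_of_pos hK, mul_comm]
      rw [this]
      have := Real.continuous_exp.continuousAt (x := (0:ℝ))
      have h2 : Tendsto (fun n : ℕ => Real.log K * (n : ℝ)⁻¹) atTop (𝓝 0) := by
        simpa using tendsto_const_nhds.mul (tendsto_inv_atTop_nhds_zero_nat (𝕜 := ℝ))
      simpa [Function.comp_def] using (Real.continuous_exp.continuousAt.tendsto.comp h2)
    simpa using (tendsto_const_nhds (x := (1 - c))).mul h1
  -- eventually g ≤ f
  have hgf : ∀ᶠ n in atTop, g n ≤ f n := by
    filter_upwards [eventually_ge_atTop 1] with n hn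
    obtain ⟨m, rfl⟩ : ∃ m, n = m + 1 := ⟨n - 1, by omega⟩
    have hlb : (1 - c) ^ (m + 1) * K ≤ matPow P (m + 1) z z := by
      have : (1 - c) ^ (m + 1) * K = (1 - c) ^ m * δ := by
        rw [hKdef, pow_succ]; field_simp
      rw [this]; exact key m
    have hn0 : ((m + 1 : ℕ) : ℝ) ≠ 0 := by positivity
    calc g (m + 1) = ((1 - c) ^ (m + 1) * K) ^ (((m + 1 : ℕ) : ℝ))⁻¹ := by
          rw [hgdef]
          rw [Real.mul_rpow (by positivity) hK.le]
          congr 1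
          rw [← Real.rpow_natCast (1 - c) (m + 1), ← Real.rpow_mul hc0.le,
            mul_inv_cancel₀ hn0, Real.rpow_one]
      _ ≤ f (m + 1) :=
          Real.rpow_le_rpow (by positivity) hlb (by positivity)
  have hliminf : liminf g atTop ≤ liminf f atTop := by
    apply liminf_le_liminf hgf (hgt.isBoundedUnder_ge)
      (isCoboundedUnder_ge_of_eventually_le atTop (Eventually.of_forall hf1))
  rw [hgt.liminf_eq] at hliminf
  exact hliminf
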